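/- Let F be a number field of degree d = [F:ℚ], let V be a finite-dimensional F-vector space, let Λ ⊆ V be an 𝒪_F-lattice in V (a finitely generated 𝒪_F-submodule that spans V over F), and let D be a compact subset of V_∞ = V ⊗_ℚ ℝ. Then there exists a constant c > 0 (depending only on D and Λ) such that for every real number a > 0 and every nonzero integral ideal 𝔫 of 𝒪_F: if the set a·D ∩ ((𝔫Λ) ∖ {0}) (intersection inside V_∞, with V embedded via x ↦ x ⊗ 1) is nonempty, then N(𝔫) ≤ c · a^d. -/

import Mathlib

open scoped TensorProduct Pointwise nonZeroDivisors
open NumberField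

/-- The scalar action of `ℝ` on `V ⊗[ℚ] ℝ` through the right tensor factor. -/
noncomputable instance tensorRealSMul (V : Type*) [AddCommGroup V] [Module ℚ V] :
    SMul ℝ (V ⊗[ℚ] ℝ) :=
  ⟨fun a x => (TensorProduct.comm ℚ V ℝ).symm (a • TensorProduct.comm ℚ V ℝ x)⟩

/-- The `ℝ`-module structure on `V ⊗[ℚ] ℝ` through the right tensor factor. -/
noncomputable instance tensorRealModule (V : Type*) [AddCommGroup V] [Module ℚ V] :
    Module ℝ (V ⊗[ℚ] ℝ) :=
  Function.Injective.module ℝ (TensorProduct.comm ℚ V ℝ).toLinearMap.toAddMonoidHom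
    (TensorProduct.comm ℚ V ℝ).injective
    (fun _ _ => (TensorProduct.comm ℚ V ℝ).apply_symm_apply _)

/-- The canonical topology on the finite-dimensional real vector space `V ⊗[ℚ] ℝ`
(the unique topology making it a topological `ℝ`-vector space). -/
noncomputable instance tensorRealTopology (V : Type*) [AddCommGroup V] [Module ℚ V] :
    TopologicalSpace (V ⊗[ℚ] ℝ) := moduleTopology ℝ (V ⊗[ℚ] ℝ)

section Aux

variable {V : Type*} [AddCommGroup V] [Module ℚ V]

theorem tensor_real_smul_tmul (a : ℝ) (v : V) (r : ℝ) :
    a • (v ⊗ₜ[ℚ] r) = v ⊗ₜ[ℚ] (a * r) := by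
  show (TensorProduct.comm ℚ V ℝ).symm (a • (TensorProduct.comm ℚ V ℝ) (v ⊗ₜ[ℚ] r)) = _
  rw [TensorProduct.comm_tmul, TensorProduct.smul_tmul', smul_eq_mul,
    TensorProduct.comm_symm_tmul]

noncomputable def realLift (g : V →ₗ[ℚ] ℂ) : V ⊗[ℚ] ℝ →ₗ[ℝ] ℂ where
  toFun := TensorProduct.lift (LinearMap.mk₂ ℚ (fun (v : V) (r : ℝ) => (r : ℂ) * g v)
    (fun v w r => by simp only [map_add]; ring)
    (fun q v r => by simp only [map_smul]; exact mul_smul_comm q _ _)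
    (fun v r s => by push_cast; ring)
    (fun q r s => by simp only [Rat.smul_def]; push_cast; ring))
  map_add' := map_add _
  map_smul' := fun a x => by
    simp only [RingHom.id_apply]
    induction x using TensorProduct.induction_on with
    | zero => rw [smul_zero, map_zero, smul_zero]
    | tmul v r =>
        rw [tensor_real_smul_tmul]
        simp only [TensorProduct.lift.tmul, LinearMap.mk₂_apply, Complex.real_smul]
        push_cast; ring
    | add x y hx hy => rw [smul_add, map_add, map_add, hx, hy, smul_add]

@[simp] theorem realLift_tmul (g : V →ₗ[ℚ] ℂ) (v : V) :
    realLift g (v ⊗ₜ[ℚ] (1 : ℝ)) = g v := by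
  simp [realLift]

instance : IsModuleTopology ℝ (V ⊗[ℚ] ℝ) := ⟨rfl⟩

theorem realLift_continuous (g : V →ₗ[ℚ] ℂ) : Continuous (realLift g) :=
  IsModuleTopology.continuous_of_linearMap _

end Aux

/-- Let `F` be a number field of degree `d = [F:ℚ]`, `V` a finite-dimensional `F`-vector
space, `Λ ⊆ V` an `𝒪_F`-lattice (a finitely generated `𝒪_F`-submodule spanning `V` over
`F`), and `D` a compact subset of `V_∞ = V ⊗_ℚ ℝ`. Then there is `c > 0` (depending only
on `D` and `Λ`) such that for every real `a > 0` and every nonzero integral ideal `𝔫`: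
if `a•D ∩ ((𝔫Λ) ∖ {0})` is nonempty (inside `V_∞`, `V` embedded via `x ↦ x ⊗ 1`),
then `N(𝔫) ≤ c · a ^ d`. -/
theorem stmt_1 (F : Type*) [Field F] [NumberField F]
    (V : Type*) [AddCommGroup V] [Module F V] [FiniteDimensional F V]
    [Module ℚ V] [IsScalarTower ℚ F V]
    [Module (𝓞 F) V] [IsScalarTower (𝓞 F) F V]
    (Λ : Submodule (𝓞 F) V) (hΛfg : Λ.FG) (hΛspan : Submodule.span F (Λ : Set V) = ⊤)
    (D : Set (V ⊗[ℚ] ℝ)) (hD : IsCompact D) :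
    ∃ c : ℝ, 0 < c ∧ ∀ a : ℝ, 0 < a → ∀ 𝔫 : Ideal (𝓞 F), 𝔫 ≠ 0 →
      (a • D ∩ ((fun x : V => x ⊗ₜ[ℚ] (1 : ℝ)) ''
        (((𝔫 • Λ : Submodule (𝓞 F) V) : Set V) \ {0}))).Nonempty →
      (Ideal.absNorm 𝔫 : ℝ) ≤ c * a ^ (Module.finrank ℚ F) := by
  classical
  obtain ⟨s, hs⟩ := hΛfg
  set n := Module.finrank F V with hn
  let b : Module.Basis (Fin n) F V := Module.finBasis F V
  obtain ⟨m, hm⟩ := IsLocalization.exist_integer_multiples (𝓞 F)⁰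
    (Finset.univ ×ˢ s) (fun p : Fin n × V => b.coord p.1 p.2)
  set φ : Fin n → V →ₗ[F] F := fun i => algebraMap (𝓞 F) F ↑m • b.coord i with hφ
  have claimA : ∀ i : Fin n, ∀ x ∈ Λ, ∃ t : 𝓞 F, algebraMap (𝓞 F) F t = φ i x := by
    intro i x hx
    rw [← hs] at hx
    induction hx using Submodule.span_induction with
    | mem v hv =>
        obtain ⟨t, ht⟩ := hm (i, v) (Finset.mem_product.mpr ⟨Finset.mem_univ _, hv⟩)
        refine ⟨t, ?_⟩
        simpa [hφ, Submonoid.smul_def, Algebra.smul_def] using ht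
    | zero => exact ⟨0, by simp⟩
    | add x y hx hy ihx ihy =>
        obtain ⟨t1, h1⟩ := ihx; obtain ⟨t2, h2⟩ := ihy
        exact ⟨t1 + t2, by rw [map_add, map_add, h1, h2]⟩
    | smul c x hx ih =>
        obtain ⟨t, ht⟩ := ih
        refine ⟨c * t, ?_⟩
        rw [← algebraMap_smul F c x, map_smul, smul_eq_mul, ← ht, ← map_mul]
  have claimC : ∀ x : V, x ≠ 0 → ∃ i, φ i x ≠ 0 := by
    intro x hx
    have hrepr : b.repr x ≠ 0 := by
      simpa using (LinearEquiv.map_ne_zero_iff b.repr).mpr hx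
    obtain ⟨i, hi⟩ := Finsupp.ne_iff.mp hrepr
    refine ⟨i, ?_⟩
    simp only [hφ, LinearMap.smul_apply, Module.Basis.coord_apply, smul_eq_mul]
    refine mul_ne_zero ?_ (by simpa using hi)
    rw [map_ne_zero_iff _ (IsFractionRing.injective (𝓞 F) F)]
    exact nonZeroDivisors.coe_ne_zero m
  -- analytic bound
  let g : Fin n × (F →ₐ[ℚ] ℂ) → (V →ₗ[ℚ] ℂ) := fun p =>
    p.2.toLinearMap.comp ((φ p.1).restrictScalars ℚ)
  let L : Fin n × (F →ₐ[ℚ] ℂ) → (V ⊗[ℚ] ℝ →ₗ[ℝ] ℂ) := fun p => realLift (g p)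
  choose C hC using fun p : Fin n × (F →ₐ[ℚ] ℂ) =>
    hD.exists_bound_of_continuousOn (realLift_continuous (g p)).continuousOn
  set R : ℝ := 1 + ∑ p : Fin n × (F →ₐ[ℚ] ℂ), |C p| with hR
  have hRpos : 0 < R := by
    have : (0:ℝ) ≤ ∑ p : Fin n × (F →ₐ[ℚ] ℂ), |C p| :=
      Finset.sum_nonneg fun p _ => abs_nonneg _
    linarith
  have hRC : ∀ p, C p ≤ R := by
    intro p
    have h1 : |C p| ≤ ∑ q : Fin n × (F →ₐ[ℚ] ℂ), |C q| :=
      Finset.single_le_sum (fun q _ => abs_nonneg (C q)) (Finset.mem_univ p)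
    calc C p ≤ |C p| := le_abs_self _
    _ ≤ R := by rw [hR]; linarith
  refine ⟨R ^ Module.finrank ℚ F, pow_pos hRpos _, ?_⟩
  intro a ha 𝔫 h𝔫 hne
  obtain ⟨w, hwD, hwim⟩ := hne
  obtain ⟨x, hx, rfl⟩ := hwim
  obtain ⟨hxmem, hxne'⟩ := hx
  have hxne : x ≠ 0 := by simpa using hxne'
  obtain ⟨i, hi⟩ := claimC x hxne
  have claimB : ∃ t ∈ 𝔫, algebraMap (𝓞 F) F t = φ i x := by
    refine Submodule.smul_induction_on hxmem ?_ ?_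
    · intro r hr v hv
      obtain ⟨t, ht⟩ := claimA i v hv
      refine ⟨r * t, Ideal.mul_mem_right t 𝔫 hr, ?_⟩
      rw [← algebraMap_smul F r v, map_smul, smul_eq_mul, ← ht, ← map_mul]
    · rintro y z ⟨t1, ht1, e1⟩ ⟨t2, ht2, e2⟩
      exact ⟨t1 + t2, Ideal.add_mem _ ht1 ht2, by rw [map_add, map_add, e1, e2]⟩
  obtain ⟨t, ht𝔫, htx⟩ := claimB
  have htne : t ≠ 0 := by
    rintro rfl
    exact hi (by rw [← htx, map_zero])
  -- arithmetic side
  have hnormZ : Algebra.norm ℤ t ≠ 0 := by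
    rw [Algebra.norm_ne_zero_iff]
    exact htne
  have hle : Ideal.absNorm 𝔫 ≤ (Algebra.norm ℤ t).natAbs := by
    refine Nat.le_of_dvd (Int.natAbs_pos.mpr hnormZ) ?_
    rw [← Ideal.absNorm_span_singleton]
    exact Ideal.absNorm_dvd_absNorm_of_le ((Ideal.span_singleton_le_iff_mem _).mpr ht𝔫)
  -- analytic side
  obtain ⟨y, hyD, hyw'⟩ := Set.mem_smul_set.mp hwD
  have hyw : a • y = x ⊗ₜ[ℚ] (1:ℝ) := hyw'
  have key : ∀ σ : F →ₐ[ℚ] ℂ, ‖σ ((t : F))‖ ≤ a * R := by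
    intro σ
    have e1 : σ ((t : F)) = L (i, σ) (x ⊗ₜ[ℚ] (1:ℝ)) := by
      simp only [L, realLift_tmul, g, LinearMap.comp_apply, LinearMap.coe_restrictScalars,
        AlgHom.toLinearMap_apply]
      rw [RingOfIntegers.coe_eq_algebraMap, htx]
    rw [e1, ← hyw, map_smul, norm_smul, Real.norm_eq_abs, abs_of_pos ha]
    exact mul_le_mul_of_nonneg_left ((hC (i, σ) y hyD).trans (hRC (i, σ))) ha.le
  have hprod_le : ∏ σ : F →ₐ[ℚ] ℂ, ‖σ ((t : F))‖ ≤ (a * R) ^ Module.finrank ℚ F := by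
    calc ∏ σ : F →ₐ[ℚ] ℂ, ‖σ ((t : F))‖
        ≤ ∏ _σ : F →ₐ[ℚ] ℂ, (a * R) :=
          Finset.prod_le_prod (fun _ _ => norm_nonneg _) (fun σ _ => key σ)
      _ = (a * R) ^ Fintype.card (F →ₐ[ℚ] ℂ) := by
          rw [Finset.prod_const, Finset.card_univ]
      _ = _ := by rw [AlgHom.card]
  have hprod_eq : ∏ σ : F →ₐ[ℚ] ℂ, ‖σ ((t : F))‖ = |((Algebra.norm ℚ ((t : F)) : ℚ) : ℝ)| := by
    have h := congrArg (‖·‖) (Algebra.norm_eq_prod_embeddings ℚ ℂ ((t : F)))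
    rw [norm_prod, eq_ratCast, ← Complex.ofReal_ratCast, Complex.norm_real, Real.norm_eq_abs] at h
    rw [h]
  have hcast : ((Algebra.norm ℤ t).natAbs : ℝ) = |((Algebra.norm ℚ ((t : F)) : ℚ) : ℝ)| := by
    rw [Nat.cast_natAbs, ← Algebra.coe_norm_int]
    push_cast
    ring
  calc (Ideal.absNorm 𝔫 : ℝ) ≤ ((Algebra.norm ℤ t).natAbs : ℝ) := Nat.cast_le.mpr hle
    _ = |((Algebra.norm ℚ ((t : F)) : ℚ) : ℝ)| := hcast
    _ = ∏ σ : F →ₐ[ℚ] ℂ, ‖σ ((t : F))‖ := hprod_eq.symm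
    _ ≤ (a * R) ^ Module.finrank ℚ F := hprod_le
    _ = R ^ Module.finrank ℚ F * a ^ Module.finrank ℚ F := by rw [mul_pow]; ring
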